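/- Let F be a field of characteristic not 2. Let α1 = α(t1:u1) and α2 = α(t2:u2) be distinct null points with join L3 = (t1t2-u1u2 : t1u2+t2u1 : t1t2+u1u2), and let a3 = [x:y:z] be a non-null point (x^2+y^2-z^2 ≠ 0) not on L3. Let h = ((t1t2-u1u2)x + (t1u2+t2u1)y - (t1t2+u1u2)z)^2 / ((x^2+y^2-z^2)(t1u2-t2u1)^2) be the quadrance of the couple (a3, L3), and let S3 be the spread between the lines a3α1 and a3α2 (computed via the hyperbolic cross product and the spread formula S = 1 - (w1·w2)^2/((w1·w1)(w2·w2)) with (l,m,n)·(l',m',n') = ll'+mm'-nn'). Then S3 = -4h/(1-h)^2, provided h ≠ 1 and the lines a3α1, a3α2 are non-null. -/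

import Mathlib

lemma dnt_aux {F : Type*} [Field F] (p1 p2 d S3 h : F)
    (hp1 : p1 ≠ 0) (hp2 : p2 ≠ 0) (hd : d ≠ 0)
    (hS3 : S3 = 1 - (p1*p2 + 2*d)^2 / (p1^2 * p2^2))
    (hh : h = (p1*p2 + d)/d) :
    S3 = -4*h / (1 - h)^2 := by
  subst hS3 hh
  have h1 : (1 : F) - (p1*p2 + d)/d = -(p1*p2)/d := by field_simp; ring
  rw [h1]
  field_simp
  ring

/-- Doubly nil triangle theorem: S3 = -4h/(1-h)². -/
theorem doubly_nil_triangle {F : Type*} [Field F] (hchar : (2 : F) ≠ 0)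
    (t1 u1 t2 u2 x y z : F)
    (h12 : t1*u2 - t2*u1 ≠ 0)
    (hnn : x^2 + y^2 - z^2 ≠ 0)
    -- w1 = coordinates of the line a3 α1, w2 = coordinates of the line a3 α2
    (w11 w12 w13 w21 w22 w23 : F)
    (hw1 : w11 = y*(t1^2 + u1^2) - (2*t1*u1)*z ∧
           w12 = z*(t1^2 - u1^2) - (t1^2 + u1^2)*x ∧
           w13 = (t1^2 - u1^2)*y - x*(2*t1*u1))
    (hw2 : w21 = y*(t2^2 + u2^2) - (2*t2*u2)*z ∧
           w22 = z*(t2^2 - u2^2) - (t2^2 + u2^2)*x ∧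
           w23 = (t2^2 - u2^2)*y - x*(2*t2*u2))
    -- the lines a3 α1 and a3 α2 are non-null
    (hw1nn : w11^2 + w12^2 - w13^2 ≠ 0) (hw2nn : w21^2 + w22^2 - w23^2 ≠ 0)
    (h S3 : F)
    (hh : h = ((t1*t2 - u1*u2)*x + (t1*u2 + t2*u1)*y - (t1*t2 + u1*u2)*z)^2 /
      ((x^2 + y^2 - z^2) * (t1*u2 - t2*u1)^2))
    (hh1 : h ≠ 1)
    (hS3 : S3 = 1 - (w11*w21 + w12*w22 - w13*w23)^2 /
      ((w11^2 + w12^2 - w13^2) * (w21^2 + w22^2 - w23^2))) :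
    S3 = -4*h / (1 - h)^2 := by
  obtain ⟨e1, e2, e3⟩ := hw1
  obtain ⟨f1, f2, f3⟩ := hw2
  have hq1 : w11^2 + w12^2 - w13^2
      = (x*(t1^2 - u1^2) + 2*t1*u1*y - z*(t1^2 + u1^2))^2 := by
    rw [e1, e2, e3]; ring
  have hq2 : w21^2 + w22^2 - w23^2
      = (x*(t2^2 - u2^2) + 2*t2*u2*y - z*(t2^2 + u2^2))^2 := by
    rw [f1, f2, f3]; ring
  have hP : w11*w21 + w12*w22 - w13*w23
      = (x*(t1^2 - u1^2) + 2*t1*u1*y - z*(t1^2 + u1^2)) *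
        (x*(t2^2 - u2^2) + 2*t2*u2*y - z*(t2^2 + u2^2))
        + 2*((x^2 + y^2 - z^2) * (t1*u2 - t2*u1)^2) := by
    rw [e1, e2, e3, f1, f2, f3]; ring
  have hN : ((t1*t2 - u1*u2)*x + (t1*u2 + t2*u1)*y - (t1*t2 + u1*u2)*z)^2
      = (x*(t1^2 - u1^2) + 2*t1*u1*y - z*(t1^2 + u1^2)) *
        (x*(t2^2 - u2^2) + 2*t2*u2*y - z*(t2^2 + u2^2))
        + (x^2 + y^2 - z^2) * (t1*u2 - t2*u1)^2 := by ring
  have hp1 : x*(t1^2 - u1^2) + 2*t1*u1*y - z*(t1^2 + u1^2) ≠ 0 := by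
    intro hc; apply hw1nn; rw [hq1, hc]; simp
  have hp2 : x*(t2^2 - u2^2) + 2*t2*u2*y - z*(t2^2 + u2^2) ≠ 0 := by
    intro hc; apply hw2nn; rw [hq2, hc]; simp
  have hd : (x^2 + y^2 - z^2) * (t1*u2 - t2*u1)^2 ≠ 0 :=
    mul_ne_zero hnn (pow_ne_zero _ h12)
  refine dnt_aux _ _ _ _ _ hp1 hp2 hd ?_ ?_
  · rw [hS3, hq1, hq2, hP]
  · rw [hh, hN]
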